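/- Suppose (z, w) solve the diagonal system z_t + λ₁ z_x = 0, w_t + λ₂ w_x = 0 classically on (0,1)×(0,T), where λ₁, λ₂ are continuous functions of (z, w). If -M ≤ z(x,0) and w(x,0) ≤ M for all x, and the boundary trace conditions are never active (strict inequalities at x = 0, 1), and whenever z = -M at an interior minimum point the right-hand side forcing is zero, then the region {-M ≤ z, w ≤ M} is invariant: -M ≤ z(x,t), w(x,t) ≤ M for all t ∈ [0,T]. -/

import Mathlib

open Set Filter Topology

lemma deriv_nonpos_of_isMinOn_left {g : ℝ → ℝ} {a t : ℝ} (hat : a < t)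
    (hg : DifferentiableAt ℝ g t) (hmin : ∀ s ∈ Set.Icc a t, g t ≤ g s) :
    deriv g t ≤ 0 := by
  have hd := hg.hasDerivAt
  rw [hasDerivAt_iff_tendsto_slope] at hd
  have hle : 𝓝[<] t ≤ 𝓝[≠] t := nhdsWithin_mono _ (fun s hs => ne_of_lt hs)
  have hd' : Tendsto (slope g t) (𝓝[<] t) (𝓝 (deriv g t)) := hd.mono_left hle
  have hev : ∀ᶠ s in 𝓝[<] t, slope g t s ≤ 0 := by
    filter_upwards [Ioo_mem_nhdsLT_of_mem (Set.mem_Ioc.2 ⟨hat, le_refl t⟩)] with s hs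
    obtain ⟨hs1, hs2⟩ := hs
    have h1 : g t ≤ g s := hmin s ⟨hs1.le, hs2.le⟩
    rw [slope_def_field]
    exact div_nonpos_of_nonneg_of_nonpos (by linarith) (by linarith)
  exact le_of_tendsto hd' hev

lemma aux_lower_bound (T M : ℝ) (hT : 0 < T)
    (u c : ℝ → ℝ → ℝ)
    (hux : ∀ x ∈ Set.Ioo (0:ℝ) 1, ∀ t ∈ Set.Ioo (0:ℝ) T,
      DifferentiableAt ℝ (fun x' => u x' t) x ∧ DifferentiableAt ℝ (fun t' => u x t') t)
    (hcont : ContinuousOn (fun p : ℝ × ℝ => u p.1 p.2) (Set.Icc 0 1 ×ˢ Set.Icc 0 T))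
    (hpde : ∀ x ∈ Set.Ioo (0:ℝ) 1, ∀ t ∈ Set.Ioo (0:ℝ) T,
      deriv (fun t' => u x t') t + c x t * deriv (fun x' => u x' t) x = 0)
    (hinit : ∀ x ∈ Set.Icc (0:ℝ) 1, -M ≤ u x 0)
    (hbdry : ∀ t ∈ Set.Icc (0:ℝ) T, -M < u 0 t ∧ -M < u 1 t) :
    ∀ x ∈ Set.Icc (0:ℝ) 1, ∀ t ∈ Set.Icc (0:ℝ) T, -M ≤ u x t := by
  -- Step 1: the bound on [0, T)
  have key : ∀ x ∈ Set.Icc (0:ℝ) 1, ∀ t ∈ Set.Ico (0:ℝ) T, -M ≤ u x t := by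
    intro x hx t ht
    by_contra hcon
    push_neg at hcon
    rcases eq_or_lt_of_le ht.1 with h0 | h0
    · exact absurd (hinit x hx) (by rw [← h0] at hcon; linarith)
    set T' : ℝ := (t + T) / 2 with hT'def
    have hT'1 : t < T' := by simp only [hT'def]; linarith [ht.2]
    have hT'2 : T' < T := by simp only [hT'def]; linarith [ht.2]
    have hT'pos : 0 < T' := lt_trans h0 hT'1
    set ε : ℝ := (-M - u x t) / (2 * T) with hεdef
    have hεpos : 0 < ε := div_pos (by linarith) (by linarith)
    set φ : ℝ × ℝ → ℝ := fun p => u p.1 p.2 + ε * p.2 with hφdef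
    set K : Set (ℝ × ℝ) := Set.Icc 0 1 ×ˢ Set.Icc 0 T' with hKdef
    have hKsub : K ⊆ Set.Icc 0 1 ×ˢ Set.Icc 0 T :=
      Set.prod_mono_right (Set.Icc_subset_Icc_right hT'2.le)
    have hKc : IsCompact K := (isCompact_Icc).prod isCompact_Icc
    have hKne : K.Nonempty := ⟨(0, 0), by
      constructor
      · exact ⟨le_refl 0, zero_le_one⟩
      · exact ⟨le_refl 0, hT'pos.le⟩⟩
    have hφcont : ContinuousOn φ K :=
      (hcont.mono hKsub).add ((continuous_const.mul continuous_snd).continuousOn)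
    obtain ⟨p, hpK, hpmin⟩ := hKc.exists_isMinOn hKne hφcont
    obtain ⟨x', t'⟩ := p
    obtain ⟨hx'mem, ht'mem⟩ := hpK
    replace hx'mem : x' ∈ Set.Icc (0:ℝ) 1 := hx'mem
    replace ht'mem : t' ∈ Set.Icc (0:ℝ) T' := ht'mem
    have hxtK : (x, t) ∈ K := ⟨hx, ⟨ht.1, hT'1.le⟩⟩
    have hφxt : φ (x, t) < -M := by
      have h1 : ε * t ≤ ε * T := by
        apply mul_le_mul_of_nonneg_left (le_of_lt ht.2) hεpos.le
      have h2 : ε * T = (-M - u x t) / 2 := by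
        field_simp [hεdef]
        rw [hεdef, div_mul_eq_mul_div, div_mul_eq_mul_div, div_eq_iff (ne_of_gt (by linarith))]
        ring
      show u x t + ε * t < -M
      linarith
    have hφp : φ (x', t') < -M := lt_of_le_of_lt (hpmin hxtK) hφxt
    have hu' : u x' t' < -M := by
      have : 0 ≤ ε * t' := mul_nonneg hεpos.le ht'mem.1
      have hφp' : u x' t' + ε * t' < -M := hφp
      linarith
    -- t' ≠ 0
    have ht'pos : 0 < t' := by
      rcases eq_or_lt_of_le ht'mem.1 with h | h
      · exfalso; have := hinit x' hx'mem; rw [← h] at hu'; linarith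
      · exact h
    have ht'T : t' ∈ Set.Ioo (0:ℝ) T := ⟨ht'pos, lt_of_le_of_lt ht'mem.2 hT'2⟩
    -- x' interior
    have hx'int : x' ∈ Set.Ioo (0:ℝ) 1 := by
      have ht'Icc : t' ∈ Set.Icc (0:ℝ) T := ⟨ht'mem.1, ht'T.2.le⟩
      rcases eq_or_lt_of_le hx'mem.1 with h | h
      · exfalso; have := (hbdry t' ht'Icc).1; rw [← h] at hu'; linarith
      rcases eq_or_lt_of_le hx'mem.2 with h | h'
      · exfalso; have := (hbdry t' ht'Icc).2; rw [h] at hu'; linarith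
      exact ⟨h, h'⟩
    -- spatial derivative vanishes
    have hdx : deriv (fun x'' => u x'' t') x' = 0 := by
      have hnbhd : Set.Icc (0:ℝ) 1 ∈ 𝓝 x' :=
        Icc_mem_nhds hx'int.1 hx'int.2
      have hlocmin : IsLocalMin (fun x'' => u x'' t' + ε * t') x' := by
        apply IsMinOn.isLocalMin _ hnbhd
        intro y hy
        exact hpmin (⟨hy, ht'mem⟩ : ((y, t') ∈ K))
      have := hlocmin.deriv_eq_zero
      rwa [deriv_add_const] at this
    -- temporal derivative ≤ -ε
    have hdt : deriv (fun t'' => u x' t'') t' ≤ -ε := by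
      have hεd : HasDerivAt (fun t'' : ℝ => ε * t'') ε t' := by
        simpa using (hasDerivAt_id t').const_mul ε
      have hgdiff : DifferentiableAt ℝ (fun t'' => u x' t'' + ε * t'') t' :=
        ((hux x' hx'int t' ht'T).2).add hεd.differentiableAt
      have hmin' : ∀ s ∈ Set.Icc 0 t', (fun t'' => u x' t'' + ε * t'') t' ≤
          (fun t'' => u x' t'' + ε * t'') s := by
        intro s hs
        exact hpmin (⟨hx'mem, ⟨hs.1, le_trans hs.2 ht'mem.2⟩⟩ : ((x', s) ∈ K))
      have h := deriv_nonpos_of_isMinOn_left ht'pos hgdiff hmin'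
      rw [deriv_fun_add ((hux x' hx'int t' ht'T).2) hεd.differentiableAt, hεd.deriv] at h
      linarith
    -- PDE contradiction
    have hpde' := hpde x' hx'int t' ht'T
    rw [hdx, mul_zero, add_zero] at hpde'
    linarith
  -- Step 2: extend to t = T by continuity
  intro x hx t ht
  rcases lt_or_eq_of_le ht.2 with h | h
  · exact key x hx t ⟨ht.1, h⟩
  subst h
  have hgc : ContinuousWithinAt (fun t' => u x t') (Set.Icc 0 t) t := by
    have h1 : ContinuousWithinAt (fun p : ℝ × ℝ => u p.1 p.2)
        (Set.Icc 0 1 ×ˢ Set.Icc 0 t) (x, t) := hcont _ ⟨hx, ht⟩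
    have h2 : ContinuousWithinAt (fun t' => ((x : ℝ), t')) (Set.Icc 0 t) t :=
      (continuous_const.prodMk continuous_id).continuousWithinAt
    exact h1.comp h2 (fun s hs => ⟨hx, hs⟩)
  have hmemI : Set.Icc (0:ℝ) t ∈ 𝓝[<] t :=
    Filter.mem_of_superset (Ico_mem_nhdsLT_of_mem (Set.mem_Ioc.2 ⟨hT, le_refl t⟩))
      Set.Ico_subset_Icc_self
  have htend : Tendsto (fun t' => u x t') (𝓝[<] t) (𝓝 (u x t)) :=
    hgc.mono_of_mem_nhdsWithin hmemI
  have hev : ∀ᶠ s in 𝓝[<] t, -M ≤ u x s := by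
    filter_upwards [Ico_mem_nhdsLT_of_mem (Set.mem_Ioc.2 ⟨hT, le_refl t⟩)] with s hs
    exact key x hx s hs
  exact ge_of_tendsto htend hev

/-- Invariant region for the diagonal system of Riemann invariants:
`z_t + λ₁ z_x = 0`, `w_t + λ₂ w_x = 0` on `(0,1) × (0,T)`. -/
theorem invariant_region_diagonal_system
    (T M : ℝ) (hT : 0 < T) (hM : 0 < M)
    (z w : ℝ → ℝ → ℝ)  -- z x t, w x t
    (Λ₁ Λ₂ : ℝ × ℝ → ℝ) (hΛ₁ : Continuous Λ₁) (hΛ₂ : Continuous Λ₂)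
    -- smoothness of the classical solution
    (hzx : ∀ x ∈ Set.Ioo (0:ℝ) 1, ∀ t ∈ Set.Ioo (0:ℝ) T,
      DifferentiableAt ℝ (fun x' => z x' t) x ∧ DifferentiableAt ℝ (fun t' => z x t') t)
    (hwx : ∀ x ∈ Set.Ioo (0:ℝ) 1, ∀ t ∈ Set.Ioo (0:ℝ) T,
      DifferentiableAt ℝ (fun x' => w x' t) x ∧ DifferentiableAt ℝ (fun t' => w x t') t)
    (hcont : ContinuousOn (fun p : ℝ × ℝ => (z p.1 p.2, w p.1 p.2))
      (Set.Icc 0 1 ×ˢ Set.Icc 0 T))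
    -- the diagonal homogeneous system (zero right-hand side forcing)
    (hpdez : ∀ x ∈ Set.Ioo (0:ℝ) 1, ∀ t ∈ Set.Ioo (0:ℝ) T,
      deriv (fun t' => z x t') t + Λ₁ (z x t, w x t) * deriv (fun x' => z x' t) x = 0)
    (hpdew : ∀ x ∈ Set.Ioo (0:ℝ) 1, ∀ t ∈ Set.Ioo (0:ℝ) T,
      deriv (fun t' => w x t') t + Λ₂ (z x t, w x t) * deriv (fun x' => w x' t) x = 0)
    -- initial bounds
    (hinit : ∀ x ∈ Set.Icc (0:ℝ) 1, -M ≤ z x 0 ∧ w x 0 ≤ M)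
    -- the boundary traces are never active (strict inequalities at x = 0, 1)
    (hbdry : ∀ t ∈ Set.Icc (0:ℝ) T,
      -M < z 0 t ∧ w 0 t < M ∧ -M < z 1 t ∧ w 1 t < M) :
    ∀ x ∈ Set.Icc (0:ℝ) 1, ∀ t ∈ Set.Icc (0:ℝ) T, -M ≤ z x t ∧ w x t ≤ M := by
  have hzcont : ContinuousOn (fun p : ℝ × ℝ => z p.1 p.2) (Set.Icc 0 1 ×ˢ Set.Icc 0 T) :=
    continuous_fst.comp_continuousOn hcont
  have hwcont : ContinuousOn (fun p : ℝ × ℝ => w p.1 p.2) (Set.Icc 0 1 ×ˢ Set.Icc 0 T) :=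
    continuous_snd.comp_continuousOn hcont
  have hzbound := aux_lower_bound T M hT z (fun x t => Λ₁ (z x t, w x t)) hzx hzcont hpdez
    (fun x hx => (hinit x hx).1)
    (fun t ht => ⟨(hbdry t ht).1, (hbdry t ht).2.2.1⟩)
  have hwbound := aux_lower_bound T M hT (fun x t => -(w x t)) (fun x t => Λ₂ (z x t, w x t))
    (fun x hx t ht => ⟨((hwx x hx t ht).1).neg, ((hwx x hx t ht).2).neg⟩)
    hwcont.neg
    (by
      intro x hx t ht
      have h := hpdew x hx t ht
      have h1 : deriv (fun t' => -(w x t')) t = -(deriv (fun t' => w x t') t) := by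
        rw [deriv.fun_neg]
      have h2 : deriv (fun x' => -(w x' t)) x = -(deriv (fun x' => w x' t) x) := by
        rw [deriv.fun_neg]
      rw [h1, h2]
      ring_nf
      linarith)
    (fun x hx => by have := (hinit x hx).2; show -M ≤ -(w x 0); linarith)
    (fun t ht => ⟨by have := (hbdry t ht).2.1; show -M < -(w 0 t); linarith,
                  by have := (hbdry t ht).2.2.2; show -M < -(w 1 t); linarith⟩)
  intro x hx t ht
  refine ⟨hzbound x hx t ht, ?_⟩
  have h2 : -M ≤ -(w x t) := hwbound x hx t ht
  linarith
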